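/- Let L be a complete lattice and γ ∈ L. Then there exist a complete lattice M, a map ι : L → M which is injective, preserves arbitrary suprema (ι (sSup A) = ⨆ a ∈ A, ι a for all A ⊆ L) and preserves nonempty infima, and elements x, t ∈ M with x ≠ t, x ∉ range ι, t ∉ range ι, such that: (i) every element of M lies in range ι ∪ {x, t}; (ii) t is the top element ⊤ of M; (iii) {m ∈ M | m ≤ x} \ {x} = {m ∈ M | m ≤ ι γ} and {m ∈ M | x ≤ m} \ {x} = {t}. Moreover x is completely join-prime in M (for every A ⊆ M with x ≤ sSup A there is a ∈ A with x ≤ a); if γ ≠ ⊤_L then ι(⊤_L) and x are incomparable; and if α, β ∈ L satisfy γ ⊓ (α ⊔ β) ≰ (γ ⊓ α) ⊔ (γ ⊓ β), then x ⊓ (ι α ⊔ ι β) ≰ (x ⊓ ι α) ⊔ (x ⊓ ι β) and x ≰ ι α ⊔ ι β (so M is strictly nondistributive). -/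

import Mathlib

section ExtIso
universe u
variable {L : Type u} [CompleteLattice L]

def EMcond (γ : L) (m : L × Prop × Prop) : Prop :=
  (m.2.2 → m.2.1) ∧ (m.2.1 → ¬ m.2.2 → m.1 = γ) ∧ (m.2.2 → m.1 = ⊤)

def EM (γ : L) : Type u := {m : L × Prop × Prop // EMcond γ m}

instance (γ : L) : PartialOrder (EM γ) := by unfold EM; infer_instance

lemma EMsInf21 (s : Set (L × Prop × Prop)) : (sInf s).2.1 ↔ ∀ m ∈ s, m.2.1 := by
  simp only [Prod.snd_sInf, Prod.fst_sInf, sInf_Prop_eq, Set.image_image, Set.mem_image,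
    forall_exists_index, and_imp, Prod.forall, eq_iff_iff]
  constructor
  · intro h a p q hm; exact h p a p q hm Iff.rfl
  · intro h p a p1 q hm hiff; exact hiff.mp (h a p1 q hm)

lemma EMsInf22 (s : Set (L × Prop × Prop)) : (sInf s).2.2 ↔ ∀ m ∈ s, m.2.2 := by
  simp only [Prod.snd_sInf, Prod.fst_sInf, Prod.snd_sInf, sInf_Prop_eq, Set.image_image,
    Set.mem_image, forall_exists_index, and_imp, Prod.forall, eq_iff_iff]
  constructor
  · intro h a p q hm; exact h q a p q hm Iff.rfl
  · intro h p a p1 q hm hiff; exact hiff.mp (h a p1 q hm)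

lemma EMclosed (γ : L) (A : Set (EM γ)) : EMcond γ (sInf (Subtype.val '' A)) := by
  set s := Subtype.val '' A with hs
  have hcond : ∀ m ∈ s, EMcond γ m := by
    rintro m ⟨a, ha, rfl⟩; exact a.2
  refine ⟨?_, ?_, ?_⟩
  · intro h2
    rw [EMsInf22] at h2
    rw [EMsInf21]
    exact fun m hm => (hcond m hm).1 (h2 m hm)
  · intro h1 h2
    rw [EMsInf21] at h1
    rw [EMsInf22] at h2
    push_neg at h2
    obtain ⟨m0, hm0, hm0q⟩ := h2
    have hγ : m0.1 = γ := (hcond m0 hm0).2.1 (h1 m0 hm0) hm0q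
    rw [Prod.fst_sInf]
    apply le_antisymm
    · exact sInf_le ⟨m0, hm0, hγ⟩
    · apply le_sInf
      rintro b ⟨m, hm, rfl⟩
      by_cases hq : m.2.2
      · rw [(hcond m hm).2.2 hq]; exact le_top
      · rw [(hcond m hm).2.1 (h1 m hm) hq]
  · intro h2
    rw [EMsInf22] at h2
    rw [Prod.fst_sInf]
    apply le_antisymm le_top
    apply le_sInf
    rintro b ⟨m, hm, rfl⟩
    rw [(hcond m hm).2.2 (h2 m hm)]

noncomputable instance (γ : L) : InfSet (EM γ) := ⟨fun A => ⟨sInf (Subtype.val '' A), EMclosed γ A⟩⟩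

lemma EMglb (γ : L) (A : Set (EM γ)) : IsGLB A (sInf A) := by
  constructor
  · intro a ha
    show (sInf A).1 ≤ a.1
    exact sInf_le ⟨a, ha, rfl⟩
  · intro b hb
    show b.1 ≤ (sInf A).1
    apply le_sInf
    rintro c ⟨a, ha, rfl⟩
    exact hb ha

noncomputable instance (γ : L) : CompleteLattice (EM γ) := completeLatticeOfInf _ (EMglb γ)

def EMι (γ : L) (a : L) : EM γ := ⟨(a, False, False), fun h => h.elim, fun h => h.elim, fun h => h.elim⟩

def EMx (γ : L) : EM γ := ⟨(γ, True, False), fun h => h.elim, fun _ _ => rfl, fun h => h.elim⟩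

def EMt (γ : L) : EM γ := ⟨(⊤, True, True), fun _ => trivial, fun _ h => (h trivial).elim, fun _ => rfl⟩

lemma EMle_iff (γ : L) (m m' : EM γ) :
    m ≤ m' ↔ m.1.1 ≤ m'.1.1 ∧ (m.1.2.1 → m'.1.2.1) ∧ (m.1.2.2 → m'.1.2.2) := Iff.rfl

lemma EMι_le (γ : L) (a : L) (m : EM γ) : EMι γ a ≤ m ↔ a ≤ m.1.1 := by
  rw [EMle_iff]
  exact ⟨fun h => h.1, fun h => ⟨h, fun hF => hF.elim, fun hF => hF.elim⟩⟩

lemma EMι_le_ι (γ : L) (a b : L) : EMι γ a ≤ EMι γ b ↔ a ≤ b := EMι_le γ a _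

lemma EMι_le_x (γ : L) (a : L) : EMι γ a ≤ EMx γ ↔ a ≤ γ := EMι_le γ a _

lemma EMnot_x_le_ι (γ : L) (a : L) : ¬ EMx γ ≤ EMι γ a := by
  rw [EMle_iff]
  rintro ⟨-, h, -⟩
  exact h trivial

lemma EMle_t (γ : L) (m : EM γ) : m ≤ EMt γ := by
  rw [EMle_iff]
  exact ⟨le_top, fun _ => trivial, fun _ => trivial⟩

lemma EMx_le_t (γ : L) : EMx γ ≤ EMt γ := EMle_t γ _

lemma EMx_ne_t (γ : L) : EMx γ ≠ EMt γ := by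
  intro h
  have := congrArg (fun m : EM γ => m.1.2.2) h
  simp only [EMx, EMt, eq_iff_iff] at this
  exact this.mpr trivial

lemma EMx_ne_ι (γ : L) (b : L) : EMx γ ≠ EMι γ b := by
  intro h
  have := congrArg (fun m : EM γ => m.1.2.1) h
  simp only [EMx, EMι, eq_iff_iff] at this
  exact this.mp trivial

lemma EMt_ne_ι (γ : L) (b : L) : EMt γ ≠ EMι γ b := by
  intro h
  have := congrArg (fun m : EM γ => m.1.2.1) h
  simp only [EMt, EMι, eq_iff_iff] at this
  exact this.mp trivial

lemma EMtrichotomy (γ : L) (m : EM γ) : (∃ b, m = EMι γ b) ∨ m = EMx γ ∨ m = EMt γ := by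
  obtain ⟨⟨a, p, q⟩, h1, h2, h3⟩ := m
  by_cases hq : q
  · refine Or.inr (Or.inr ?_)
    apply Subtype.ext
    show (a, p, q) = (⊤, True, True)
    exact Prod.ext (h3 hq) (Prod.ext (eq_true (h1 hq)) (eq_true hq))
  · by_cases hp : p
    · refine Or.inr (Or.inl ?_)
      apply Subtype.ext
      show (a, p, q) = (γ, True, False)
      exact Prod.ext (h2 hp hq) (Prod.ext (eq_true hp) (eq_false hq))
    · refine Or.inl ⟨a, ?_⟩
      apply Subtype.ext
      show (a, p, q) = (a, False, False)
      exact Prod.ext rfl (Prod.ext (eq_false hp) (eq_false hq))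

lemma EMι_sSup (γ : L) (A : Set L) : IsLUB (EMι γ '' A) (EMι γ (sSup A)) := by
  constructor
  · rintro m ⟨a, ha, rfl⟩
    exact (EMι_le_ι γ a _).mpr (le_sSup ha)
  · intro m hm
    rw [EMι_le]
    apply sSup_le
    intro a ha
    exact (EMι_le γ a m).mp (hm ⟨a, ha, rfl⟩)

lemma EMι_sInf (γ : L) (A : Set L) (hA : A.Nonempty) :
    IsGLB (EMι γ '' A) (EMι γ (sInf A)) := by
  constructor
  · rintro m ⟨a, ha, rfl⟩
    exact (EMι_le_ι γ _ a).mpr (sInf_le ha)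
  · intro m hm
    obtain ⟨a0, ha0⟩ := hA
    have h0 := (EMle_iff γ m _).mp (hm ⟨a0, ha0, rfl⟩)
    rw [EMle_iff]
    refine ⟨le_sInf fun a ha => ((EMle_iff γ m _).mp (hm ⟨a, ha, rfl⟩)).1, h0.2.1, h0.2.2⟩

lemma EMsup_ι (γ : L) (a b : L) : EMι γ a ⊔ EMι γ b = EMι γ (a ⊔ b) := by
  apply IsLUB.unique (isLUB_pair)
  constructor
  · rintro m (rfl | rfl)
    · exact (EMι_le_ι γ _ _).mpr le_sup_left
    · exact (EMι_le_ι γ _ _).mpr le_sup_right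
  · intro m hm
    rw [EMι_le]
    exact sup_le ((EMι_le γ a m).mp (hm (Set.mem_insert _ _)))
      ((EMι_le γ b m).mp (hm (Set.mem_insert_of_mem _ rfl)))

lemma EMinf_x_ι (γ : L) (c : L) : EMx γ ⊓ EMι γ c = EMι γ (γ ⊓ c) := by
  apply IsGLB.unique (isGLB_pair)
  constructor
  · rintro m (rfl | rfl)
    · exact (EMι_le_x γ _).mpr inf_le_left
    · exact (EMι_le_ι γ _ _).mpr inf_le_right
  · intro m hm
    have h1 := (EMle_iff γ m _).mp (hm (Set.mem_insert _ _))
    have h2 := (EMle_iff γ m _).mp (hm (Set.mem_insert_of_mem _ rfl))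
    rw [EMle_iff]
    exact ⟨le_inf h1.1 h2.1, h2.2.1, h2.2.2⟩

end ExtIso

theorem stmt_1 {L : Type u} [CompleteLattice L] (γ : L) :
    ∃ (M : Type u) (_ : CompleteLattice M) (ι : L → M) (x t : M),
      Function.Injective ι ∧
      (∀ A : Set L, ι (sSup A) = ⨆ a ∈ A, ι a) ∧
      (∀ A : Set L, A.Nonempty → ι (sInf A) = ⨅ a ∈ A, ι a) ∧
      x ≠ t ∧ x ∉ Set.range ι ∧ t ∉ Set.range ι ∧
      (∀ m : M, m ∈ Set.range ι ∨ m = x ∨ m = t) ∧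
      t = ⊤ ∧
      ({m : M | m ≤ x} \ {x} = {m : M | m ≤ ι γ}) ∧
      ({m : M | x ≤ m} \ {x} = {t}) ∧
      (∀ A : Set M, x ≤ sSup A → ∃ a ∈ A, x ≤ a) ∧
      (γ ≠ ⊤ → ¬ ι ⊤ ≤ x ∧ ¬ x ≤ ι ⊤) ∧
      (∀ α β : L, ¬ γ ⊓ (α ⊔ β) ≤ (γ ⊓ α) ⊔ (γ ⊓ β) →
        (¬ x ⊓ (ι α ⊔ ι β) ≤ (x ⊓ ι α) ⊔ (x ⊓ ι β)) ∧ ¬ x ≤ ι α ⊔ ι β) := by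
  refine ⟨EM γ, inferInstance, EMι γ, EMx γ, EMt γ, ?_, ?_, ?_, EMx_ne_t γ, ?_, ?_, ?_, ?_, ?_, ?_, ?_, ?_, ?_⟩
  · intro a b h
    have := congrArg (fun m : EM γ => m.1.1) h
    exact this
  · intro A
    rw [← sSup_image]
    exact ((EMι_sSup γ A).sSup_eq).symm
  · intro A hA
    rw [← sInf_image]
    exact ((EMι_sInf γ A hA).sInf_eq).symm
  · rintro ⟨b, hb⟩
    exact EMx_ne_ι γ b hb.symm
  · rintro ⟨b, hb⟩
    exact EMt_ne_ι γ b hb.symm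
  · intro m
    rcases EMtrichotomy γ m with ⟨b, rfl⟩ | h | h
    · exact Or.inl ⟨b, rfl⟩
    · exact Or.inr (Or.inl h)
    · exact Or.inr (Or.inr h)
  · exact top_unique (EMle_t γ ⊤)
  · ext m
    simp only [Set.mem_diff, Set.mem_setOf_eq, Set.mem_singleton_iff]
    constructor
    · rintro ⟨hle, hne⟩
      rcases EMtrichotomy γ m with ⟨b, rfl⟩ | rfl | rfl
      · exact (EMι_le_ι γ b γ).mpr ((EMι_le_x γ b).mp hle)
      · exact absurd rfl hne
      · exact absurd ((EMle_iff γ _ _).mp hle).2.2 (fun h => (h trivial).elim)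
    · intro hle
      have h := (EMle_iff γ m _).mp hle
      constructor
      · rw [EMle_iff]
        exact ⟨h.1, fun _ => trivial, h.2.2⟩
      · rintro rfl
        exact h.2.1 trivial
  · ext m
    simp only [Set.mem_diff, Set.mem_setOf_eq, Set.mem_singleton_iff]
    constructor
    · rintro ⟨hle, hne⟩
      rcases EMtrichotomy γ m with ⟨b, rfl⟩ | rfl | rfl
      · exact absurd hle (EMnot_x_le_ι γ b)
      · exact absurd rfl hne
      · rfl
    · rintro rfl
      exact ⟨EMx_le_t γ, Ne.symm (EMx_ne_t γ)⟩
  · intro A hA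
    by_contra hcon
    push_neg at hcon
    have hsub : ∀ a ∈ A, ∃ b, a = EMι γ b := by
      intro a ha
      rcases EMtrichotomy γ a with hb | rfl | rfl
      · exact hb
      · exact absurd le_rfl (hcon _ ha)
      · exact absurd (EMx_le_t γ) (hcon _ ha)
    set c := sSup {b | EMι γ b ∈ A} with hc
    have hub : sSup A ≤ EMι γ c := by
      apply sSup_le
      intro a ha
      obtain ⟨b, rfl⟩ := hsub a ha
      exact (EMι_le_ι γ b c).mpr (le_sSup ha)
    exact EMnot_x_le_ι γ c (hA.trans hub)
  · intro hγ
    constructor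
    · intro h
      exact hγ (top_le_iff.mp ((EMι_le_x γ ⊤).mp h))
    · exact EMnot_x_le_ι γ ⊤
  · intro α β h
    rw [EMsup_ι, EMinf_x_ι, EMinf_x_ι, EMinf_x_ι, EMsup_ι]
    exact ⟨fun hle => h ((EMι_le_ι γ _ _).mp hle), EMnot_x_le_ι γ _⟩
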